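/- Let A and B be categories, F : A ⥤ B a functor with right adjoint U : B ⥤ A (an adjunction F ⊣ U, with unit η : 𝟭_A ⟶ F ⋙ U and counit ε : U ⋙ F ⟶ 𝟭_B). Let H : A ⥤ B be a functor and p : F ⟶ H a natural transformation. Assume that for every object a of A, the component p.app (U.obj (F.obj a)) : F(U(F a)) ⟶ H(U(F a)) is an isomorphism. Then p is a split natural monomorphism: the natural transformation φ : H ⟶ F whose component at a is φ_a = ε.app (F.obj a) ∘ (inverse of p.app (U.obj (F.obj a))) ∘ H.map (η.app a) satisfies p ≫ φ = 𝟙 F (i.e. φ_a ∘ p.app a = id for every a). -/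

import Mathlib

open CategoryTheory

/-- Construction of the left inverse `φ₂` of the purity transformation (proofs of
Theorem 5.5.7 and Proposition 9.3.7): if `F ⊣ U` with unit `η` and counit `ε`, and
`p : F ⟶ H` is a natural transformation whose component at every object of the form
`U (F a)` is an isomorphism, then `p` is a split natural monomorphism, split by the
natural transformation with components `φ_a = H(η_a) ≫ (p_{U(F a)})⁻¹ ≫ ε_{F a}`. -/
theorem splitMono_of_isIso_on_image
    {A B : Type*} [Category A] [Category B]
    (F : A ⥤ B) (U : B ⥤ A) (adj : F ⊣ U)
    (H : A ⥤ B) (p : F ⟶ H)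
    (hiso : ∀ a : A, IsIso (p.app (U.obj (F.obj a)))) :
    ∃ φ : H ⟶ F,
      (∀ a : A, φ.app a =
        H.map (adj.unit.app a) ≫
          inv (p.app (U.obj (F.obj a))) (I := hiso a) ≫
            adj.counit.app (F.obj a)) ∧
      p ≫ φ = 𝟙 F := by
  haveI := hiso
  refine ⟨⟨fun a => H.map (adj.unit.app a) ≫
      inv (p.app (U.obj (F.obj a))) ≫ adj.counit.app (F.obj a), ?_⟩, fun a => rfl, ?_⟩
  · intro a b f
    have h1 : H.map f ≫ H.map (adj.unit.app b)
        = H.map (adj.unit.app a) ≫ H.map (U.map (F.map f)) := by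
      rw [← H.map_comp, ← H.map_comp, ← adj.unit_naturality]
    have h2 : H.map (U.map (F.map f)) ≫ inv (p.app (U.obj (F.obj b)))
        = inv (p.app (U.obj (F.obj a))) ≫ F.map (U.map (F.map f)) := by
      rw [IsIso.comp_inv_eq, Category.assoc, p.naturality, IsIso.inv_hom_id_assoc]
    have h3 : F.map (U.map (F.map f)) ≫ adj.counit.app (F.obj b)
        = adj.counit.app (F.obj a) ≫ F.map f := adj.counit.naturality (F.map f)
    simp only [← Category.assoc, h1]
    simp only [Category.assoc]
    rw [reassoc_of% h2, h3]
  · ext a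
    have h1 : p.app a ≫ H.map (adj.unit.app a)
        = F.map (adj.unit.app a) ≫ p.app (U.obj (F.obj a)) := (p.naturality _).symm
    simp [h1, adj.left_triangle_components]
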